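/- For the Helmholtz oscillator y'' = -c·y² + a·y' - (6/25)·a²·y, the function I(x,y,z) = (12a²y² + 50cy³ - 60ayz + 75z²)·e^{-(6a/5)x} satisfies ∂ₓI + z·∂_yI + (-cy² + az - (6/25)a²y)·∂_zI = 0 identically on ℝ³. -/

import Mathlib

noncomputable def pdx (F : ℝ × ℝ × ℝ → ℝ) (p : ℝ × ℝ × ℝ) : ℝ :=
  deriv (fun t => F (t, p.2.1, p.2.2)) p.1

noncomputable def pdy (F : ℝ × ℝ × ℝ → ℝ) (p : ℝ × ℝ × ℝ) : ℝ :=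
  deriv (fun t => F (p.1, t, p.2.2)) p.2.1

noncomputable def pdz (F : ℝ × ℝ × ℝ → ℝ) (p : ℝ × ℝ × ℝ) : ℝ :=
  deriv (fun t => F (p.1, p.2.1, t)) p.2.2

/-- The Cartan vector field `D = ∂ₓ + z ∂_y + φ ∂_z` of `y'' = φ(x,y,y')`. -/
noncomputable def Dtot (φ F : ℝ × ℝ × ℝ → ℝ) (p : ℝ × ℝ × ℝ) : ℝ :=
  pdx F p + p.2.2 * pdy F p + φ p * pdz F p

/-- Evaluation of a polynomial in three variables at a point of ℝ³. -/
noncomputable def mev (P : MvPolynomial (Fin 3) ℝ) (p : ℝ × ℝ × ℝ) : ℝ :=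
  MvPolynomial.eval ![p.1, p.2.1, p.2.2] P

/-- First integral of the Helmholtz oscillator with friction, case b = -(6/25)a². -/
theorem helmholtz_case2 (a c : ℝ) :
    ∀ p : ℝ × ℝ × ℝ,
      Dtot (fun q => -c * q.2.1 ^ 2 + a * q.2.2 - (6 / 25) * a ^ 2 * q.2.1)
        (fun q => (12 * a ^ 2 * q.2.1 ^ 2 + 50 * c * q.2.1 ^ 3
            - 60 * a * q.2.1 * q.2.2 + 75 * q.2.2 ^ 2)
          * Real.exp (-(6 * a / 5) * q.1)) p = 0 := by
  rintro ⟨x, y, z⟩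
  have hx : deriv (fun t : ℝ => (12 * a ^ 2 * y ^ 2 + 50 * c * y ^ 3
      - 60 * a * y * z + 75 * z ^ 2) * Real.exp (-(6 * a / 5) * t)) x
      = (12 * a ^ 2 * y ^ 2 + 50 * c * y ^ 3 - 60 * a * y * z + 75 * z ^ 2)
        * (Real.exp (-(6 * a / 5) * x) * (-(6 * a / 5))) := by
    rw [deriv_const_mul]
    · congr 1
      rw [show (fun t : ℝ => Real.exp (-(6 * a / 5) * t)) = Real.exp ∘ (fun t => -(6 * a / 5) * t) from rfl,
        deriv_comp]
      · simp [Real.deriv_exp, mul_comm]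
      · exact Real.differentiable_exp _
      · fun_prop
    · fun_prop
  have hy : deriv (fun t : ℝ => (12 * a ^ 2 * t ^ 2 + 50 * c * t ^ 3
      - 60 * a * t * z + 75 * z ^ 2) * Real.exp (-(6 * a / 5) * x)) y
      = (12 * a ^ 2 * (2 * y) + 50 * c * (3 * y ^ 2) - 60 * a * z)
        * Real.exp (-(6 * a / 5) * x) := by
    rw [deriv_mul_const]
    · congr 1
      have : HasDerivAt (fun t : ℝ => 12 * a ^ 2 * t ^ 2 + 50 * c * t ^ 3
          - 60 * a * t * z + 75 * z ^ 2)
          (12 * a ^ 2 * (2 * y) + 50 * c * (3 * y ^ 2) - 60 * a * z) y := by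
        have h1 : HasDerivAt (fun t : ℝ => t ^ 2) (2 * y) y := by
          simpa using (hasDerivAt_pow 2 y)
        have h2 : HasDerivAt (fun t : ℝ => t ^ 3) (3 * y ^ 2) y := by
          simpa using (hasDerivAt_pow 3 y)
        have h3 : HasDerivAt (fun t : ℝ => t) 1 y := hasDerivAt_id y
        have := (((h1.const_mul (12 * a ^ 2)).add (h2.const_mul (50 * c))).sub
          ((h3.const_mul (60 * a)).mul_const z)).add_const (75 * z ^ 2)
        exact this.congr_deriv (by ring)
      exact this.deriv
    · fun_prop
  have hz : deriv (fun t : ℝ => (12 * a ^ 2 * y ^ 2 + 50 * c * y ^ 3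
      - 60 * a * y * t + 75 * t ^ 2) * Real.exp (-(6 * a / 5) * x)) z
      = (-(60 * a * y) + 75 * (2 * z)) * Real.exp (-(6 * a / 5) * x) := by
    rw [deriv_mul_const]
    · congr 1
      have h1 : HasDerivAt (fun t : ℝ => t ^ 2) (2 * z) z := by
        simpa using (hasDerivAt_pow 2 z)
      have h3 : HasDerivAt (fun t : ℝ => t) 1 z := hasDerivAt_id z
      have := (((hasDerivAt_const z (12 * a ^ 2 * y ^ 2 + 50 * c * y ^ 3)).sub
        ((h3.const_mul (60 * a * y)))).add (h1.const_mul 75))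
      have h := this.deriv
      exact h.trans (by ring)
    · fun_prop
  simp only [Dtot, pdx, pdy, pdz]
  rw [hx, hy, hz]
  ring
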